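/- Fix an integer k ≥ 1. For every integer x ≥ k + 2, P(V(k) = x) = q·p^k·P(L_{x−k−1} < k). -/

import Mathlib

open MeasureTheory Finset

/-- Waiting time for the first success run of length `k`: the smallest `n ≥ k` such that
trials `n - k + 1, …, n` are all successes (trials are indexed from `1`). -/
noncomputable def waitingTime (k : ℕ) (ω : ℕ → Bool) : ℕ :=
  sInf {n | k ≤ n ∧ ∀ i ∈ Finset.Icc (n - k + 1) n, ω i = true}

/-- Length of the longest run of consecutive successes among trials `1, …, n`. -/
noncomputable def longestRun (n : ℕ) (ω : ℕ → Bool) : ℕ :=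
  sSup {m | ∃ j, j + m ≤ n ∧ ∀ i ∈ Finset.Ioc j (j + m), ω i = true}

lemma meas_cyl (n : ℕ) (b : ℕ → Bool) :
    MeasurableSet {ω : ℕ → Bool | ∀ i, 1 ≤ i → i ≤ n → ω i = b i} := by
  have : {ω : ℕ → Bool | ∀ i, 1 ≤ i → i ≤ n → ω i = b i}
      = ⋂ i ∈ Finset.Icc 1 n, (fun ω : ℕ → Bool => ω i) ⁻¹' {b i} := by
    ext ω
    simp only [Set.mem_setOf_eq, Set.mem_iInter, Set.mem_preimage, Set.mem_singleton_iff,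
      Finset.mem_Icc]
    constructor
    · rintro h i ⟨h1, h2⟩; exact h i h1 h2
    · intro h i h1 h2; exact h i ⟨h1, h2⟩
  rw [this]
  exact MeasurableSet.biInter (Finset.Icc 1 n).countable_toSet
    (fun i _ => (measurable_pi_apply i) (MeasurableSet.singleton _))

open scoped Classical in
lemma decomp (μ : Measure (ℕ → Bool)) (n : ℕ) (F : (ℕ → Bool) → Prop)
    (hF : ∀ ω ω' : ℕ → Bool, (∀ i, 1 ≤ i → i ≤ n → ω i = ω' i) → F ω → F ω') :
    μ {ω | F ω}
      = ∑ s ∈ (Finset.Icc 1 n).powerset.filter (fun s => F fun i => decide (i ∈ s)),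
          μ {ω | ∀ i, 1 ≤ i → i ≤ n → ω i = decide (i ∈ s)} := by
  rw [← measure_biUnion_finset ?disj (fun s _ => meas_cyl n _)]
  · congr 1
    ext ω
    simp only [Set.mem_iUnion, Finset.mem_filter, Finset.mem_powerset, Set.mem_setOf_eq,
      exists_prop]
    constructor
    · intro hFω
      refine ⟨(Finset.Icc 1 n).filter (fun i => ω i = true), ⟨Finset.filter_subset _ _, ?_⟩, ?_⟩
      · refine hF ω _ ?_ hFω
        intro i h1 h2
        by_cases h : ω i = true <;>
          simp [Finset.mem_filter, Finset.mem_Icc, h1, h2, h] <;> simp at h <;> simp [h]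
      · intro i h1 h2
        by_cases h : ω i = true <;>
          simp [Finset.mem_filter, Finset.mem_Icc, h1, h2, h] <;> simp at h <;> simp [h]
    · rintro ⟨s, ⟨_, hFs⟩, hag⟩
      exact hF _ ω (fun i h1 h2 => (hag i h1 h2).symm) hFs
  case disj =>
    intro s hs t ht hst
    simp only [Finset.coe_filter, Set.mem_setOf_eq, Finset.mem_powerset] at hs ht
    refine Set.disjoint_left.mpr ?_
    intro ω hωs hωt
    apply hst
    ext i
    constructor
    · intro hi
      have h1 := hs.1 hi
      simp only [Finset.mem_Icc] at h1
      have e1 := hωs i h1.1 h1.2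
      have e2 := hωt i h1.1 h1.2
      have : decide (i ∈ s) = decide (i ∈ t) := by rw [← e1, ← e2]
      simpa [hi] using this.symm
    · intro hi
      have h1 := ht.1 hi
      simp only [Finset.mem_Icc] at h1
      have e1 := hωs i h1.1 h1.2
      have e2 := hωt i h1.1 h1.2
      have : decide (i ∈ s) = decide (i ∈ t) := by rw [← e1, ← e2]
      simpa [hi] using this

lemma longestRun_lt_iff (n k : ℕ) (hk : 1 ≤ k) (ω : ℕ → Bool) :
    longestRun n ω < k ↔ ∀ j, j + k ≤ n → ∃ i ∈ Finset.Ioc j (j + k), ω i = false := by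
  unfold longestRun
  have hbdd : BddAbove {m | ∃ j, j + m ≤ n ∧ ∀ i ∈ Finset.Ioc j (j + m), ω i = true} :=
    ⟨n, fun m hm => by obtain ⟨j, hj, _⟩ := hm; omega⟩
  have hne : {m | ∃ j, j + m ≤ n ∧ ∀ i ∈ Finset.Ioc j (j + m), ω i = true}.Nonempty :=
    ⟨0, 0, by simp⟩
  constructor
  · intro h j hj
    by_contra hc
    push_neg at hc
    have hmem : k ∈ {m | ∃ j, j + m ≤ n ∧ ∀ i ∈ Finset.Ioc j (j + m), ω i = true} :=
      ⟨j, hj, fun i hi => by have := hc i hi; revert this; cases ω i <;> simp⟩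
    have := le_csSup hbdd hmem
    omega
  · intro h
    by_contra hc
    push_neg at hc
    obtain ⟨j, hjn, hall⟩ := Nat.sSup_mem hne hbdd
    set M := sSup {m | ∃ j, j + m ≤ n ∧ ∀ i ∈ Finset.Ioc j (j + m), ω i = true}
    obtain ⟨i, hi, hfalse⟩ := h j (by omega)
    have hi' : i ∈ Finset.Ioc j (j + M) := by
      simp only [Finset.mem_Ioc] at hi ⊢; omega
    have := hall i hi'
    simp [this] at hfalse

lemma waitingTime_char (k x : ℕ) (hx : 1 ≤ x) (ω : ℕ → Bool) :
    waitingTime k ω = x ↔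
      (k ≤ x ∧ ∀ i ∈ Finset.Icc (x - k + 1) x, ω i = true) ∧
      ∀ n < x, ¬(k ≤ n ∧ ∀ i ∈ Finset.Icc (n - k + 1) n, ω i = true) := by
  unfold waitingTime
  set S := {n | k ≤ n ∧ ∀ i ∈ Finset.Icc (n - k + 1) n, ω i = true} with hS
  constructor
  · intro h
    have hne : S.Nonempty := by
      by_contra hemp
      rw [Set.not_nonempty_iff_eq_empty] at hemp
      rw [hemp, Nat.sInf_empty] at h
      omega
    constructor
    · have := Nat.sInf_mem hne; rwa [h] at this
    · intro n hn
      rw [← h] at hn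
      exact Nat.notMem_of_lt_sInf hn
  · rintro ⟨hx', hmin⟩
    refine le_antisymm (Nat.sInf_le hx') ?_
    by_contra hlt
    push_neg at hlt
    have hmem : sInf S ∈ S := Nat.sInf_mem ⟨x, hx'⟩
    simp only [hS, Set.mem_setOf_eq] at hmem
    exact hmin _ hlt hmem

lemma waitingTime_eq_iff (k m : ℕ) (hk : 1 ≤ k) (ω : ℕ → Bool) :
    waitingTime k ω = m + k + 1 ↔
      ((∀ j, j + k ≤ m → ∃ i ∈ Finset.Ioc j (j + k), ω i = false)
        ∧ ω (m + 1) = false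
        ∧ ∀ i ∈ Finset.Icc (m + 2) (m + k + 1), ω i = true) := by
  rw [waitingTime_char k (m + k + 1) (by omega) ω]
  constructor
  · rintro ⟨⟨_, htail⟩, hmin⟩
    have htail' : ∀ i ∈ Finset.Icc (m + 2) (m + k + 1), ω i = true := by
      intro i hi
      apply htail
      simp only [Finset.mem_Icc] at hi ⊢
      omega
    refine ⟨?_, ?_, htail'⟩
    · intro j hj
      have hmn := hmin (j + k) (by omega)
      push_neg at hmn
      obtain ⟨i, hi, hif⟩ := hmn (by omega)
      refine ⟨i, ?_, ?_⟩
      · simp only [Finset.mem_Icc] at hi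
        simp only [Finset.mem_Ioc]
        omega
      · revert hif; cases ω i <;> simp
    · have hmn := hmin (m + k) (by omega)
      push_neg at hmn
      obtain ⟨i, hi, hif⟩ := hmn (by omega)
      simp only [Finset.mem_Icc] at hi
      have : i = m + 1 := by
        by_contra hne
        have : i ∈ Finset.Icc (m + 2) (m + k + 1) := by
          simp only [Finset.mem_Icc]; omega
        exact hif (htail' i this)
      subst this
      revert hif; cases ω (m+1) <;> simp
  · rintro ⟨H, hfalse, htail⟩
    constructor
    · refine ⟨by omega, ?_⟩
      intro i hi
      apply htail
      simp only [Finset.mem_Icc] at hi ⊢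
      omega
    · rintro n hn ⟨hkn, hrun⟩
      by_cases hc : n ≤ m + k
      · by_cases hc2 : n ≤ m
        · obtain ⟨i, hi, hif⟩ := H (n - k) (by omega)
          have : i ∈ Finset.Icc (n - k + 1) n := by
            simp only [Finset.mem_Ioc] at hi
            simp only [Finset.mem_Icc]
            omega
          have := hrun i this
          simp [this] at hif
        · have : m + 1 ∈ Finset.Icc (n - k + 1) n := by
            simp only [Finset.mem_Icc]; omega
          have := hrun _ this
          simp [this] at hfalse
      · omega

lemma longestRun_coord (n : ℕ) (ω ω' : ℕ → Bool) (hag : ∀ i, 1 ≤ i → i ≤ n → ω i = ω' i) :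
    longestRun n ω = longestRun n ω' := by
  unfold longestRun
  congr 1
  ext m
  simp only [Set.mem_setOf_eq]
  constructor <;> rintro ⟨j, hj, hall⟩ <;> refine ⟨j, hj, fun i hi => ?_⟩ <;>
    simp only [Finset.mem_Ioc] at hi
  · rw [← hag i (by omega) (by omega)]; exact hall i (by simp only [Finset.mem_Ioc]; omega)
  · rw [hag i (by omega) (by omega)]; exact hall i (by simp only [Finset.mem_Ioc]; omega)

lemma cyl_factor (p : ℝ) (hp0 : 0 < p) (hp1 : p < 1) (k m : ℕ)
    (μ : Measure (ℕ → Bool))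
    (hμ : ∀ (n : ℕ) (b : ℕ → Bool),
      μ {ω | ∀ i, 1 ≤ i → i ≤ n → ω i = b i}
        = ENNReal.ofReal (∏ i ∈ Finset.Icc 1 n, if b i = true then p else 1 - p))
    (t : Finset ℕ) (ht : t ⊆ Finset.Icc 1 m) :
    μ {ω | ∀ i, 1 ≤ i → i ≤ m + k + 1 →
        ω i = decide (i ∈ t ∪ Finset.Icc (m + 2) (m + k + 1))}
      = ENNReal.ofReal ((1 - p) * p ^ k)
        * μ {ω | ∀ i, 1 ≤ i → i ≤ m → ω i = decide (i ∈ t)} := by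
  rw [hμ, hμ]
  set b : ℕ → Bool := fun i => decide (i ∈ t ∪ Finset.Icc (m + 2) (m + k + 1)) with hb
  have key : ∀ n, Finset.Icc 1 n = Finset.Ioc 0 n := fun n => by
    rw [← Finset.Icc_add_one_left_eq_Ioc]; rfl
  have hsplit : (∏ i ∈ Finset.Icc 1 (m + k + 1), if b i = true then p else 1 - p)
      = (∏ i ∈ Finset.Icc 1 m, if b i = true then p else 1 - p)
        * ((1 - p) * p ^ k) := by
    rw [key, ← Finset.prod_Ioc_consecutive _ (Nat.zero_le m) (by omega : m ≤ m + k + 1),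
      ← Finset.prod_Ioc_consecutive _ (by omega : m ≤ m + 1) (by omega : m + 1 ≤ m + k + 1),
      ← key]
    congr 1
    congr 1
    · have h1 : Finset.Ioc m (m + 1) = {m + 1} := by
        ext i; simp only [Finset.mem_Ioc, Finset.mem_singleton]; omega
      rw [h1, Finset.prod_singleton]
      have : b (m + 1) = false := by
        simp only [hb, decide_eq_false_iff_not, Finset.mem_union, Finset.mem_Icc]
        push_neg
        constructor
        · intro hmem
          have := ht hmem
          simp only [Finset.mem_Icc] at this
          omega
        · omega
      simp [this]
    · have : ∀ i ∈ Finset.Ioc (m + 1) (m + k + 1), (if b i = true then p else 1 - p) = p := by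
        intro i hi
        simp only [Finset.mem_Ioc] at hi
        have : b i = true := by
          simp only [hb, decide_eq_true_eq, Finset.mem_union, Finset.mem_Icc]
          right; omega
        simp [this]
      rw [Finset.prod_congr rfl this, Finset.prod_const, Nat.card_Ioc]
      congr 1
      omega
  have hagree : (∏ i ∈ Finset.Icc 1 m, if b i = true then p else 1 - p)
      = ∏ i ∈ Finset.Icc 1 m, if decide (i ∈ t) = true then p else 1 - p := by
    refine Finset.prod_congr rfl fun i hi => ?_
    simp only [Finset.mem_Icc] at hi
    have : b i = decide (i ∈ t) := by
      simp only [hb]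
      have : i ∉ Finset.Icc (m + 2) (m + k + 1) := by
        simp only [Finset.mem_Icc]; omega
      simp [Finset.mem_union, this]
    rw [this]
  rw [hsplit, hagree, mul_comm, ENNReal.ofReal_mul (mul_nonneg (by linarith) (pow_nonneg hp0.le k))]

theorem stmt13 (p : ℝ) (hp0 : 0 < p) (hp1 : p < 1) (k : ℕ) (hk : 1 ≤ k)
    (μ : Measure (ℕ → Bool)) [IsProbabilityMeasure μ]
    (hμ : ∀ (n : ℕ) (b : ℕ → Bool),
      μ {ω | ∀ i, 1 ≤ i → i ≤ n → ω i = b i}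
        = ENNReal.ofReal (∏ i ∈ Finset.Icc 1 n, if b i = true then p else 1 - p)) :
    ∀ x : ℕ, k + 2 ≤ x →
      (μ {ω | waitingTime k ω = x}).toReal
        = (1 - p) * p ^ k * (μ {ω | longestRun (x - k - 1) ω < k}).toReal := by
  classical
  intro x hx
  obtain ⟨m, rfl⟩ : ∃ m, x = m + k + 1 := ⟨x - k - 1, by omega⟩
  have hmeq : m + k + 1 - k - 1 = m := by omega
  rw [hmeq]
  have hVset : {ω : ℕ → Bool | waitingTime k ω = m + k + 1}
      = {ω : ℕ → Bool | (∀ j, j + k ≤ m → ∃ i ∈ Finset.Ioc j (j + k), ω i = false)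
          ∧ ω (m + 1) = false
          ∧ ∀ i ∈ Finset.Icc (m + 2) (m + k + 1), ω i = true} := by
    ext ω; exact waitingTime_eq_iff k m hk ω
  have hLset : {ω : ℕ → Bool | longestRun m ω < k}
      = {ω : ℕ → Bool | ∀ j, j + k ≤ m → ∃ i ∈ Finset.Ioc j (j + k), ω i = false} := by
    ext ω; exact longestRun_lt_iff m k hk ω
  rw [hVset, hLset]
  have hHcoord : ∀ ω ω' : ℕ → Bool, (∀ i, 1 ≤ i → i ≤ m → ω i = ω' i) →
      (∀ j, j + k ≤ m → ∃ i ∈ Finset.Ioc j (j + k), ω i = false) →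
      (∀ j, j + k ≤ m → ∃ i ∈ Finset.Ioc j (j + k), ω' i = false) := by
    rintro ω ω' hag h1 j hj
    obtain ⟨i, hi, hf⟩ := h1 j hj
    have hib : 1 ≤ i ∧ i ≤ m := by simp only [Finset.mem_Ioc] at hi; omega
    exact ⟨i, hi, by rw [← hag i hib.1 hib.2]; exact hf⟩
  have hGcoord : ∀ ω ω' : ℕ → Bool, (∀ i, 1 ≤ i → i ≤ m + k + 1 → ω i = ω' i) →
      ((∀ j, j + k ≤ m → ∃ i ∈ Finset.Ioc j (j + k), ω i = false)
        ∧ ω (m + 1) = false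
        ∧ ∀ i ∈ Finset.Icc (m + 2) (m + k + 1), ω i = true) →
      ((∀ j, j + k ≤ m → ∃ i ∈ Finset.Ioc j (j + k), ω' i = false)
        ∧ ω' (m + 1) = false
        ∧ ∀ i ∈ Finset.Icc (m + 2) (m + k + 1), ω' i = true) := by
    rintro ω ω' hag ⟨h1, h2, h3⟩
    refine ⟨hHcoord ω ω' (fun i hi1 hi2 => hag i hi1 (by omega)) h1, ?_, ?_⟩
    · rw [← hag (m + 1) (by omega) (by omega)]; exact h2
    · intro i hi
      have hib : 1 ≤ i ∧ i ≤ m + k + 1 := by simp only [Finset.mem_Icc] at hi; omega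
      rw [← hag i hib.1 hib.2]; exact h3 i hi
  rw [decomp μ (m + k + 1) _ hGcoord, decomp μ m _ hHcoord]
  have hE : ∀ t : Finset ℕ, t ⊆ Finset.Icc 1 m →
      ((t ∪ Finset.Icc (m + 2) (m + k + 1)) ∩ Finset.Icc 1 m = t) := by
    intro t ht
    ext i
    simp only [Finset.mem_inter, Finset.mem_union, Finset.mem_Icc]
    constructor
    · rintro ⟨hu, h1, h2⟩
      rcases hu with h | h
      · exact h
      · omega
    · intro hit
      have := ht hit
      simp only [Finset.mem_Icc] at this
      exact ⟨Or.inl hit, this⟩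
  have hc : (0:ℝ) ≤ (1 - p) * p ^ k := mul_nonneg (by linarith) (pow_nonneg hp0.le k)
  rw [← ENNReal.toReal_ofReal hc, ← ENNReal.toReal_mul]
  congr 1
  rw [Finset.mul_sum]
  refine Finset.sum_nbij' (fun s => s ∩ Finset.Icc 1 m)
    (fun t => t ∪ Finset.Icc (m + 2) (m + k + 1)) ?_ ?_ ?_ ?_ ?_
  · intro s hs
    simp only [Finset.mem_filter, Finset.mem_powerset] at hs ⊢
    obtain ⟨hsub, h1, _, _⟩ := hs
    refine ⟨Finset.inter_subset_right, ?_⟩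
    refine hHcoord _ _ ?_ h1
    intro i hi1 hi2
    simp only [decide_eq_decide, Finset.mem_inter, Finset.mem_Icc]
    tauto
  · intro t ht
    simp only [Finset.mem_filter, Finset.mem_powerset] at ht ⊢
    obtain ⟨hsub, h1⟩ := ht
    refine ⟨?_, ?_, ?_, ?_⟩
    · intro i hi
      simp only [Finset.mem_union, Finset.mem_Icc] at hi ⊢
      rcases hi with h | h
      · have := hsub h; simp only [Finset.mem_Icc] at this; omega
      · omega
    · refine hHcoord _ _ ?_ h1
      intro i hi1 hi2
      simp only [decide_eq_decide, Finset.mem_union, Finset.mem_Icc]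
      constructor
      · intro h; exact Or.inl h
      · rintro (h | h)
        · exact h
        · omega
    · simp only [decide_eq_false_iff_not, Finset.mem_union, Finset.mem_Icc]
      push_neg
      constructor
      · intro hmem
        have := hsub hmem; simp only [Finset.mem_Icc] at this; omega
      · omega
    · intro i hi
      simp only [Finset.mem_Icc] at hi
      simp only [decide_eq_true_eq, Finset.mem_union, Finset.mem_Icc]
      right; omega
  · intro s hs
    simp only [Finset.mem_filter, Finset.mem_powerset] at hs
    obtain ⟨hsub, _, h2, h3⟩ := hs
    ext i
    simp only [Finset.mem_union, Finset.mem_inter, Finset.mem_Icc]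
    constructor
    · rintro (⟨h, _⟩ | h)
      · exact h
      · have := h3 i (by simp only [Finset.mem_Icc]; omega)
        simpa using this
    · intro his
      have hb := hsub his
      simp only [Finset.mem_Icc] at hb
      by_cases hcc : i ≤ m
      · exact Or.inl ⟨his, hb.1, hcc⟩
      · right
        simp only [decide_eq_false_iff_not] at h2
        have : i ≠ m + 1 := by rintro rfl; exact h2 his
        omega
  · intro t ht
    simp only [Finset.mem_filter, Finset.mem_powerset] at ht
    exact hE t ht.1
  · intro s hs
    simp only [Finset.mem_filter, Finset.mem_powerset] at hs
    obtain ⟨hsub, _, h2, h3⟩ := hs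
    have hfix : s = (s ∩ Finset.Icc 1 m) ∪ Finset.Icc (m + 2) (m + k + 1) := by
      ext i
      simp only [Finset.mem_union, Finset.mem_inter, Finset.mem_Icc]
      constructor
      · intro his
        have hb := hsub his
        simp only [Finset.mem_Icc] at hb
        by_cases hcc : i ≤ m
        · exact Or.inl ⟨his, hb.1, hcc⟩
        · right
          simp only [decide_eq_false_iff_not] at h2
          have : i ≠ m + 1 := by rintro rfl; exact h2 his
          omega
      · rintro (⟨h, _⟩ | h)
        · exact h
        · have := h3 i (by simp only [Finset.mem_Icc]; omega)
          simpa using this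
    calc μ {ω : ℕ → Bool | ∀ i, 1 ≤ i → i ≤ m + k + 1 → ω i = decide (i ∈ s)}
        = μ {ω : ℕ → Bool | ∀ i, 1 ≤ i → i ≤ m + k + 1 →
            ω i = decide (i ∈ (s ∩ Finset.Icc 1 m) ∪ Finset.Icc (m + 2) (m + k + 1))} := by
          rw [← hfix]
      _ = ENNReal.ofReal ((1 - p) * p ^ k)
            * μ {ω : ℕ → Bool | ∀ i, 1 ≤ i → i ≤ m → ω i = decide (i ∈ s ∩ Finset.Icc 1 m)} :=
          cyl_factor p hp0 hp1 k m μ hμ _ Finset.inter_subset_right
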